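/- Conditional expectation is the unique Bregman projection: let X be an integrable random variable taking values in ℝ^k on a probability space, with E[φ(X)] finite, and let m be a sub-σ-algebra. Then for every m-measurable integrable random variable Y taking values in ℝ^k, E[D_φ(X, Y)] ≥ E[D_φ(X, E[X | m])], and equality holds if and only if Y = E[X | m] almost surely; that is, the conditional expectation E[X | m] is the almost-surely unique minimizer of the expected Bregman loss over m-measurable predictors. -/

import Mathlib

open MeasureTheory ProbabilityTheory Filter

/-- The Bregman loss `D_φ(a,b) = φ(a) − φ(b) − ⟨a − b, ∇φ(b)⟩` associated to a
differentiable function `φ` on `ℝ^k`. -/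
noncomputable def bregman {k : ℕ} (φ : EuclideanSpace ℝ (Fin k) → ℝ)
    (a b : EuclideanSpace ℝ (Fin k)) : ℝ :=
  φ a - φ b - fderiv ℝ φ b (a - b)

section Pointwise

variable {k : ℕ} {φ : EuclideanSpace ℝ (Fin k) → ℝ}

lemma hasDerivAt_line (a b : EuclideanSpace ℝ (Fin k)) (hdiff : Differentiable ℝ φ) (t : ℝ) :
    HasDerivAt (fun s : ℝ => φ (b + s • (a - b))) (fderiv ℝ φ (b + t • (a - b)) (a - b)) t := by
  have hline : HasDerivAt (fun s : ℝ => b + s • (a - b)) (a - b) t := by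
    simpa using ((hasDerivAt_id t).smul_const (a - b)).const_add b
  exact ((hdiff _).hasFDerivAt).comp_hasDerivAt t hline

lemma line_convexOn (hconv : ConvexOn ℝ Set.univ φ) (a b : EuclideanSpace ℝ (Fin k)) :
    ConvexOn ℝ Set.univ (fun s : ℝ => φ (b + s • (a - b))) := by
  have h := hconv.comp_affineMap (AffineMap.lineMap b a)
  rw [Set.preimage_univ] at h
  have heq : (φ ∘ ⇑(AffineMap.lineMap b a)) = fun s : ℝ => φ (b + s • (a - b)) := by
    funext s
    simp only [Function.comp_apply, AffineMap.lineMap_apply_module]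
    congr 1
    module
  rwa [heq] at h

lemma bregman_nonneg (hconv : ConvexOn ℝ Set.univ φ) (hdiff : Differentiable ℝ φ)
    (a b : EuclideanSpace ℝ (Fin k)) : 0 ≤ bregman φ a b := by
  set g : ℝ → ℝ := fun s : ℝ => φ (b + s • (a - b)) with hg
  have h0 : HasDerivAt g (fderiv ℝ φ b (a - b)) 0 := by
    simpa using hasDerivAt_line a b hdiff 0
  have hslope := (line_convexOn hconv a b).le_slope_of_hasDerivAt (Set.mem_univ 0)
    (Set.mem_univ 1) one_pos h0
  have hg1 : g 1 = φ a := by simp [hg]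
  have hg0 : g 0 = φ b := by simp [hg]
  have hba : b + (1:ℝ) • (a - b) = a := by rw [one_smul]; abel
  have hbb : b + (0:ℝ) • (a - b) = b := by rw [zero_smul, add_zero]
  rw [slope_def_field, hba, hbb] at hslope
  simp only [div_one, sub_zero] at hslope
  unfold bregman
  linarith [hslope]

lemma line_strictConvexOn (hconv : StrictConvexOn ℝ Set.univ φ)
    {a b : EuclideanSpace ℝ (Fin k)} (hab : a ≠ b) :
    StrictConvexOn ℝ Set.univ (fun s : ℝ => φ (b + s • (a - b))) := by
  refine ⟨convex_univ, fun x _ y _ hxy c d hc hd hcd => ?_⟩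
  have hne : b + x • (a - b) ≠ b + y • (a - b) := by
    intro h
    apply hxy
    have := add_left_cancel h
    exact smul_left_injective ℝ (sub_ne_zero.2 hab) this
  have harg : b + (c • x + d • y) • (a - b) = c • (b + x • (a - b)) + d • (b + y • (a - b)) := by
    have h2 : c • (b + x • (a - b)) + d • (b + y • (a - b))
        = (c + d) • b + (c * x + d * y) • (a - b) := by
      simp only [smul_add, smul_smul, add_smul]; abel
    rw [h2, hcd, one_smul, smul_eq_mul, smul_eq_mul]
  calc φ (b + (c • x + d • y) • (a - b))
      = φ (c • (b + x • (a - b)) + d • (b + y • (a - b))) := by rw [harg]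
    _ < c • φ (b + x • (a - b)) + d • φ (b + y • (a - b)) :=
        hconv.2 (Set.mem_univ _) (Set.mem_univ _) hne hc hd hcd

lemma bregman_pos (hconv : StrictConvexOn ℝ Set.univ φ) (hdiff : Differentiable ℝ φ)
    {a b : EuclideanSpace ℝ (Fin k)} (hab : a ≠ b) : 0 < bregman φ a b := by
  set g : ℝ → ℝ := fun s : ℝ => φ (b + s • (a - b)) with hg
  have h0 : HasDerivAt g (fderiv ℝ φ b (a - b)) 0 := by
    simpa using hasDerivAt_line a b hdiff 0
  have hslope := (line_strictConvexOn hconv hab).lt_slope_of_hasDerivAt (Set.mem_univ 0)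
    (Set.mem_univ 1) one_pos h0
  have hg1 : g 1 = φ a := by simp [hg]
  have hg0 : g 0 = φ b := by simp [hg]
  have hba : b + (1:ℝ) • (a - b) = a := by rw [one_smul]; abel
  have hbb : b + (0:ℝ) • (a - b) = b := by rw [zero_smul, add_zero]
  rw [slope_def_field, hba, hbb] at hslope
  simp only [div_one, sub_zero] at hslope
  unfold bregman
  linarith [hslope]

lemma bregman_self (c : EuclideanSpace ℝ (Fin k)) : bregman φ c c = 0 := by
  simp [bregman]

lemma bregman_eq_zero_iff (hconv : StrictConvexOn ℝ Set.univ φ) (hdiff : Differentiable ℝ φ)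
    (a b : EuclideanSpace ℝ (Fin k)) : bregman φ a b = 0 ↔ a = b := by
  constructor
  · intro h
    by_contra hab
    exact absurd h (ne_of_gt (bregman_pos hconv hdiff hab))
  · rintro rfl; exact bregman_self a

end Pointwise

section CondexpCLM

variable {α : Type*} {m : MeasurableSpace α} {mα : MeasurableSpace α} {μ : Measure α}
  [IsProbabilityMeasure μ]

lemma condexp_clm {E F : Type*} [NormedAddCommGroup E] [NormedSpace ℝ E] [CompleteSpace E]
    [NormedAddCommGroup F] [NormedSpace ℝ F] [CompleteSpace F]
    (hm : m ≤ mα) (T : E →L[ℝ] F) {f : α → E} (hf : Integrable f μ) :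
    (fun ω => T ((μ[f|m]) ω)) =ᵐ[μ] μ[fun ω => T (f ω)|m] := by
  refine ae_eq_condExp_of_forall_setIntegral_eq hm (T.integrable_comp hf) ?_ ?_ ?_
  · intro s _ _
    exact (T.integrable_comp integrable_condExp).integrableOn
  · intro s hs hμs
    rw [T.integral_comp_comm integrable_condExp.integrableOn,
      T.integral_comp_comm hf.integrableOn, setIntegral_condExp hm hf hs]
  · exact (T.continuous.comp_stronglyMeasurable stronglyMeasurable_condExp).aestronglyMeasurable

end CondexpCLM

section BregmanMeas

lemma bregman_aesm {Ω : Type*} {mΩ : MeasurableSpace Ω} {μ : Measure Ω} {k : ℕ}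
    {φ : EuclideanSpace ℝ (Fin k) → ℝ} (hdiff : Differentiable ℝ φ)
    {F G : Ω → EuclideanSpace ℝ (Fin k)}
    (hF : AEStronglyMeasurable F μ) (hG : AEStronglyMeasurable G μ) :
    AEStronglyMeasurable (fun ω => bregman φ (F ω) (G ω)) μ := by
  have h1 : AEStronglyMeasurable (fun ω => φ (F ω)) μ :=
    hdiff.continuous.comp_aestronglyMeasurable hF
  have h2 : AEStronglyMeasurable (fun ω => φ (G ω)) μ :=
    hdiff.continuous.comp_aestronglyMeasurable hG
  have h3 : AEStronglyMeasurable (fun ω => fderiv ℝ φ (G ω)) μ :=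
    ((measurable_fderiv ℝ φ).comp_aemeasurable hG.aemeasurable).aestronglyMeasurable
  have h4 : AEStronglyMeasurable (fun ω => fderiv ℝ φ (G ω) (F ω - G ω)) μ :=
    isBoundedBilinearMap_apply.continuous.comp_aestronglyMeasurable (h3.prodMk (hF.sub hG))
  exact (h1.sub h2).sub h4

end BregmanMeas

lemma clm_apply_eq_sum {k : ℕ} (L : EuclideanSpace ℝ (Fin k) →L[ℝ] ℝ)
    (w : EuclideanSpace ℝ (Fin k)) :
    L w = ∑ i, w i * L (EuclideanSpace.single i 1) := by
  have hw : w = ∑ i, w i • EuclideanSpace.single i (1:ℝ) := by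
    have := (EuclideanSpace.basisFun (Fin k) ℝ).sum_repr w
    simpa [EuclideanSpace.basisFun_apply, EuclideanSpace.basisFun_repr] using this.symm
  conv_lhs => rw [hw, map_sum]
  simp [smul_eq_mul]

section KeyZero

variable {Ω : Type*} {m mΩ : MeasurableSpace Ω} {μ : Measure Ω} [IsProbabilityMeasure μ]

lemma mul_zero_condexp' (hm : m ≤ mΩ) {f c : Ω → ℝ} (hf : Integrable f μ)
    (hfcond : μ[f|m] =ᵐ[μ] 0) (hc : StronglyMeasurable[m] c) {n : ℝ} (hcb : ∀ ω, |c ω| ≤ n) :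
    Integrable (fun ω => c ω * f ω) μ ∧ ∫ ω, c ω * f ω ∂μ = 0 := by
  have hint : Integrable (fun ω => c ω * f ω) μ :=
    hf.bdd_mul (hc.mono hm).aestronglyMeasurable (ae_of_all _ fun ω => by rw [Real.norm_eq_abs]; exact hcb ω)
  refine ⟨hint, ?_⟩
  have h1 : μ[fun ω => c ω * f ω|m] =ᵐ[μ] fun ω => c ω * (μ[f|m]) ω := by
    have := condExp_mul_of_stronglyMeasurable_left hc (by simpa [Pi.mul_def] using hint) hf
    simpa [Pi.mul_def] using this
  have h2 : (fun ω => c ω * (μ[f|m]) ω) =ᵐ[μ] (fun _ => (0:ℝ)) := by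
    filter_upwards [hfcond] with ω hω
    simp [hω]
  calc ∫ ω, c ω * f ω ∂μ = ∫ ω, (μ[fun ω => c ω * f ω|m]) ω ∂μ := (integral_condExp hm).symm
    _ = ∫ ω, (0:ℝ) ∂μ := integral_congr_ae (h1.trans h2)
    _ = 0 := integral_zero _ _

lemma key_zero (hm : m ≤ mΩ) {k : ℕ}
    {W : Ω → EuclideanSpace ℝ (Fin k)} (hWint : Integrable W μ)
    (hWcond : ∀ i : Fin k, μ[fun ω => W ω i|m] =ᵐ[μ] 0)
    {v : Ω → EuclideanSpace ℝ (Fin k) →L[ℝ] ℝ} (hv : StronglyMeasurable[m] v)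
    {q : Ω → ℝ} (hq : Integrable q μ) (hle : ∀ ω, v ω (W ω) ≤ q ω) :
    Integrable (fun ω => v ω (W ω)) μ ∧ ∫ ω, v ω (W ω) ∂μ = 0 := by
  set t : Ω → ℝ := fun ω => v ω (W ω) with ht_def
  have ht_meas : AEStronglyMeasurable t μ :=
    isBoundedBilinearMap_apply.continuous.comp_aestronglyMeasurable
      (((hv.mono hm).aestronglyMeasurable).prodMk hWint.1)
  -- the indicator functions
  set χ : ℕ → Ω → ℝ := fun n => Set.indicator {ω | ‖v ω‖ ≤ (n:ℝ)} (fun _ => (1:ℝ)) with hχ_def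
  have hA_meas : ∀ n : ℕ, MeasurableSet[m] {ω | ‖v ω‖ ≤ (n:ℝ)} := fun n =>
    hv.norm.measurable (measurableSet_Iic : MeasurableSet (Set.Iic (n:ℝ)))
  have hχ_meas : ∀ n, StronglyMeasurable[m] (χ n) := fun n =>
    (stronglyMeasurable_const.indicator (hA_meas n))
  have hχ_nonneg : ∀ n ω, 0 ≤ χ n ω := by
    intro n ω
    by_cases h : ω ∈ {ω | ‖v ω‖ ≤ (n:ℝ)} <;> simp [hχ_def, h]
  have hχ_le_one : ∀ n ω, χ n ω ≤ 1 := by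
    intro n ω
    by_cases h : ω ∈ {ω | ‖v ω‖ ≤ (n:ℝ)} <;> simp [hχ_def, h]
  have hχ_one : ∀ (n : ℕ) ω, ‖v ω‖ ≤ (n:ℝ) → χ n ω = 1 := by
    intro n ω h; simp [hχ_def, h]
  have hχ_mono : ∀ ω, Monotone fun n => χ n ω := by
    intro ω a b hab
    show χ a ω ≤ χ b ω
    by_cases h : ‖v ω‖ ≤ (a:ℝ)
    · rw [hχ_one a ω h, hχ_one b ω (h.trans (by exact_mod_cast Nat.cast_le.2 hab))]
    · have : χ a ω = 0 := by simp [hχ_def, h]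
      rw [this]; exact hχ_nonneg b ω
  -- each truncation integrates to zero
  have hterm : ∀ n : ℕ, Integrable (fun ω => χ n ω * t ω) μ ∧ ∫ ω, χ n ω * t ω ∂μ = 0 := by
    intro n
    have hdecomp : (fun ω => χ n ω * t ω)
        = fun ω => ∑ i, (χ n ω * v ω (EuclideanSpace.single i 1)) * W ω i := by
      funext ω
      rw [ht_def]
      simp only
      rw [clm_apply_eq_sum (v ω) (W ω), Finset.mul_sum]
      congr 1; funext i; ring
    have hWi : ∀ i : Fin k, Integrable (fun ω => W ω i) μ := by
      intro i
      have := (EuclideanSpace.proj i (𝕜 := ℝ)).integrable_comp hWint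
      simpa using this
    have hci : ∀ i : Fin k, StronglyMeasurable[m]
        (fun ω => χ n ω * v ω (EuclideanSpace.single i 1)) := by
      intro i
      exact (hχ_meas n).mul
        (((ContinuousLinearMap.apply ℝ ℝ (EuclideanSpace.single i 1)).continuous).comp_stronglyMeasurable hv)
    have hcb : ∀ i : Fin k, ∀ ω, |χ n ω * v ω (EuclideanSpace.single i 1)|
        ≤ n * ‖(EuclideanSpace.single i (1:ℝ))‖ := by
      intro i ω
      by_cases h : ‖v ω‖ ≤ (n:ℝ)
      · rw [hχ_one n ω h, one_mul]
        calc |v ω (EuclideanSpace.single i 1)| ≤ ‖v ω‖ * ‖(EuclideanSpace.single i (1:ℝ))‖ :=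
              (v ω).le_opNorm _
          _ ≤ n * ‖(EuclideanSpace.single i (1:ℝ))‖ := by
              apply mul_le_mul_of_nonneg_right h (norm_nonneg _)
      · have : χ n ω = 0 := by simp [hχ_def, h]
        rw [this, zero_mul, abs_zero]
        positivity
    have hi : ∀ i : Fin k, Integrable
          (fun ω => (χ n ω * v ω (EuclideanSpace.single i 1)) * W ω i) μ
        ∧ ∫ ω, (χ n ω * v ω (EuclideanSpace.single i 1)) * W ω i ∂μ = 0 := fun i =>
      mul_zero_condexp' hm (hWi i) (hWcond i) (hci i) (hcb i)
    constructor
    · rw [hdecomp]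
      exact integrable_finset_sum _ fun i _ => (hi i).1
    · rw [hdecomp, integral_finset_sum _ fun i _ => (hi i).1]
      exact Finset.sum_eq_zero fun i _ => (hi i).2
  -- positive and negative parts
  set tp : Ω → ℝ := fun ω => max (t ω) 0 with htp_def
  set tm : Ω → ℝ := fun ω => max (-t ω) 0 with htm_def
  have htm_nonneg : ∀ ω, 0 ≤ tm ω := fun ω => le_max_right _ _
  have htp_meas : AEStronglyMeasurable tp μ := (ht_meas.aemeasurable.max aemeasurable_const).aestronglyMeasurable
  have htm_meas : AEStronglyMeasurable tm μ := (ht_meas.neg.aemeasurable.max aemeasurable_const).aestronglyMeasurable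
  have htp_int : Integrable tp μ := by
    refine hq.abs.mono htp_meas (ae_of_all _ fun ω => ?_)
    rw [Real.norm_eq_abs, Real.norm_eq_abs, abs_of_nonneg (le_max_right (t ω) 0), abs_abs]
    exact max_le ((hle ω).trans (le_abs_self _)) (abs_nonneg _)
  have htm_eq : ∀ ω, tm ω = tp ω - t ω := by
    intro ω
    show max (-t ω) 0 = max (t ω) 0 - t ω
    rcases le_total (t ω) 0 with h | h
    · rw [max_eq_left (neg_nonneg.2 h), max_eq_right h]; ring
    · rw [max_eq_right (neg_nonpos.2 h), max_eq_left h]; ring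
  have hχt_int : ∀ n, Integrable (fun ω => χ n ω * t ω) μ := fun n => (hterm n).1
  have hχtp_int : ∀ n, Integrable (fun ω => χ n ω * tp ω) μ := by
    intro n
    refine htp_int.mono ((((hχ_meas n).mono hm).aestronglyMeasurable).mul htp_meas)
      (ae_of_all _ fun ω => ?_)
    have h0 : 0 ≤ tp ω := le_max_right _ _
    rw [Real.norm_eq_abs, Real.norm_eq_abs, abs_of_nonneg (mul_nonneg (hχ_nonneg n ω) h0),
      abs_of_nonneg h0]
    exact mul_le_of_le_one_left h0 (hχ_le_one n ω)
  have hχtm_eq : ∀ n, (fun ω => χ n ω * tm ω) = fun ω => χ n ω * tp ω - χ n ω * t ω := by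
    intro n; funext ω; rw [htm_eq ω]; ring
  have hχtm_int : ∀ n, Integrable (fun ω => χ n ω * tm ω) μ := by
    intro n
    rw [hχtm_eq n]
    exact (hχtp_int n).sub (hχt_int n)
  have hχtm_bound : ∀ n, ∫ ω, χ n ω * tm ω ∂μ ≤ ∫ ω, tp ω ∂μ := by
    intro n
    have h1 : ∫ ω, χ n ω * tm ω ∂μ = ∫ ω, χ n ω * tp ω ∂μ := by
      conv_lhs => rw [hχtm_eq n]
      rw [integral_sub (hχtp_int n) (hχt_int n), (hterm n).2, sub_zero]
    rw [h1]
    refine integral_mono (hχtp_int n) htp_int fun ω => ?_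
    exact mul_le_of_le_one_left (le_max_right _ _) (hχ_le_one n ω)
  have hsup : ∀ ω, (⨆ n : ℕ, ENNReal.ofReal (χ n ω * tm ω)) = ENNReal.ofReal (tm ω) := by
    intro ω
    apply le_antisymm
    · refine iSup_le fun n => ENNReal.ofReal_le_ofReal ?_
      exact mul_le_of_le_one_left (htm_nonneg ω) (hχ_le_one n ω)
    · obtain ⟨n, hn⟩ := exists_nat_ge ‖v ω‖
      have he : ENNReal.ofReal (tm ω) = ENNReal.ofReal (χ n ω * tm ω) := by
        rw [hχ_one n ω hn, one_mul]
      rw [he]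
      exact le_iSup (fun n => ENNReal.ofReal (χ n ω * tm ω)) n
  have hmct : ∫⁻ ω, ENNReal.ofReal (tm ω) ∂μ
      = ⨆ n, ∫⁻ ω, ENNReal.ofReal (χ n ω * tm ω) ∂μ := by
    have hmeas : ∀ n, AEMeasurable (fun ω => ENNReal.ofReal (χ n ω * tm ω)) μ := fun n =>
      ENNReal.measurable_ofReal.comp_aemeasurable (hχtm_int n).aestronglyMeasurable.aemeasurable
    have hmono : ∀ᵐ ω ∂μ, Monotone fun n => ENNReal.ofReal (χ n ω * tm ω) := by
      refine ae_of_all _ fun ω a b hab => ?_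
      exact ENNReal.ofReal_le_ofReal
        (mul_le_mul_of_nonneg_right (hχ_mono ω hab) (htm_nonneg ω))
    calc ∫⁻ ω, ENNReal.ofReal (tm ω) ∂μ
        = ∫⁻ ω, ⨆ n, ENNReal.ofReal (χ n ω * tm ω) ∂μ := lintegral_congr fun ω => (hsup ω).symm
      _ = ⨆ n, ∫⁻ ω, ENNReal.ofReal (χ n ω * tm ω) ∂μ := lintegral_iSup' hmeas hmono
  have htm_lint : ∫⁻ ω, ENNReal.ofReal (tm ω) ∂μ ≤ ENNReal.ofReal (∫ ω, tp ω ∂μ) := by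
    rw [hmct]
    refine iSup_le fun n => ?_
    rw [← ofReal_integral_eq_lintegral_ofReal (hχtm_int n)
      (ae_of_all _ fun ω => mul_nonneg (hχ_nonneg n ω) (htm_nonneg ω))]
    exact ENNReal.ofReal_le_ofReal (hχtm_bound n)
  have htm_int : Integrable tm μ := by
    refine ⟨htm_meas, ?_⟩
    rw [hasFiniteIntegral_iff_norm]
    calc ∫⁻ ω, ENNReal.ofReal ‖tm ω‖ ∂μ = ∫⁻ ω, ENNReal.ofReal (tm ω) ∂μ :=
          lintegral_congr fun ω => by rw [Real.norm_eq_abs, abs_of_nonneg (htm_nonneg ω)]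
      _ ≤ ENNReal.ofReal (∫ ω, tp ω ∂μ) := htm_lint
      _ < ⊤ := ENNReal.ofReal_lt_top
  have ht_int : Integrable t μ := by
    have he : t = fun ω => tp ω - tm ω := by funext ω; rw [htm_eq ω]; ring
    rw [he]
    exact htp_int.sub htm_int
  refine ⟨ht_int, ?_⟩
  have hlim : ∀ ω, Filter.Tendsto (fun n => χ n ω * t ω) atTop (nhds (t ω)) := by
    intro ω
    obtain ⟨N, hN⟩ := exists_nat_ge ‖v ω‖
    apply tendsto_atTop_of_eventually_const (i₀ := N)
    intro n hn
    rw [hχ_one n ω (hN.trans (by exact_mod_cast hn)), one_mul]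
  have hDCT := tendsto_integral_of_dominated_convergence (F := fun n ω => χ n ω * t ω)
    (fun ω => |t ω|) (fun n => (hχt_int n).1) ht_int.abs
    (fun n => ae_of_all _ fun ω => ?_) (ae_of_all _ hlim)
  swap
  · rw [Real.norm_eq_abs, abs_mul]
    have h1 : |χ n ω| ≤ 1 := by
      rw [abs_of_nonneg (hχ_nonneg n ω)]; exact hχ_le_one n ω
    calc |χ n ω| * |t ω| ≤ 1 * |t ω| := mul_le_mul_of_nonneg_right h1 (abs_nonneg _)
      _ = |t ω| := one_mul _
  · have heq : (fun n : ℕ => ∫ ω, χ n ω * t ω ∂μ) = fun _ => (0:ℝ) :=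
      funext fun n => (hterm n).2
    rw [heq] at hDCT
    exact tendsto_nhds_unique hDCT tendsto_const_nhds

end KeyZero


/-- Conditional expectation is the unique Bregman projection: for `φ : ℝ^k → ℝ` strictly convex
and differentiable, `X` integrable with `E[φ(X)]` finite, and any `m`-measurable integrable `Y`,
`E[D_φ(X,Y)] ≥ E[D_φ(X, E[X|m])]` with equality iff `Y = E[X|m]` a.s. -/
theorem condexp_unique_bregman_projection
    {Ω : Type*} {mΩ : MeasurableSpace Ω} (μ : Measure Ω) [IsProbabilityMeasure μ]
    {k : ℕ} (φ : EuclideanSpace ℝ (Fin k) → ℝ)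
    (hφconv : StrictConvexOn ℝ Set.univ φ) (hφdiff : Differentiable ℝ φ)
    (X : Ω → EuclideanSpace ℝ (Fin k)) (hXint : Integrable X μ)
    (hφXint : Integrable (fun ω => φ (X ω)) μ)
    (m : MeasurableSpace Ω) (hm : m ≤ mΩ)
    (Y : Ω → EuclideanSpace ℝ (Fin k)) (hYmeas : StronglyMeasurable[m] Y)
    (hYint : Integrable Y μ) :
    (∫⁻ ω, ENNReal.ofReal (bregman φ (X ω) (Y ω)) ∂μ)
      ≥ (∫⁻ ω, ENNReal.ofReal (bregman φ (X ω) ((μ[X|m]) ω)) ∂μ) ∧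
    ((∫⁻ ω, ENNReal.ofReal (bregman φ (X ω) (Y ω)) ∂μ)
        = (∫⁻ ω, ENNReal.ofReal (bregman φ (X ω) ((μ[X|m]) ω)) ∂μ)
      ↔ Y =ᵐ[μ] μ[X|m]) := by
  set Z : Ω → EuclideanSpace ℝ (Fin k) := μ[X|m] with hZ_def
  have hZmeas : StronglyMeasurable[m] Z := stronglyMeasurable_condExp
  have hZint : Integrable Z μ := integrable_condExp
  set W : Ω → EuclideanSpace ℝ (Fin k) := fun ω => X ω - Z ω with hW_def
  have hWint : Integrable W μ := hXint.sub hZint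
  -- coordinates of W have zero conditional expectation
  have hWcond : ∀ i : Fin k, μ[fun ω => W ω i|m] =ᵐ[μ] 0 := by
    intro i
    set T : EuclideanSpace ℝ (Fin k) →L[ℝ] ℝ := EuclideanSpace.proj i with hT_def
    have hTX : Integrable (fun ω => T (X ω)) μ := T.integrable_comp hXint
    have hTZ : Integrable (fun ω => T (Z ω)) μ := T.integrable_comp hZint
    have h1 : (fun ω => W ω i) = (fun ω => T (X ω)) - (fun ω => T (Z ω)) := rfl
    rw [h1]
    have h2 := condExp_sub (m := m) (μ := μ) hTX hTZ
    refine h2.trans ?_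
    have h3 : μ[fun ω => T (Z ω)|m] = fun ω => T (Z ω) :=
      condExp_of_stronglyMeasurable hm (T.continuous.comp_stronglyMeasurable hZmeas) hTZ
    have h4 := condexp_clm hm T hXint
    rw [h3]
    filter_upwards [h4] with ω hω
    simp only [Pi.sub_apply, Pi.zero_apply]
    rw [← hω]
    exact sub_self _
  -- measurability of composed gradients
  have hgradZ : StronglyMeasurable[m] fun ω => fderiv ℝ φ (Z ω) :=
    ((measurable_fderiv ℝ φ).comp hZmeas.measurable).stronglyMeasurable
  have hgradY : StronglyMeasurable[m] fun ω => fderiv ℝ φ (Y ω) :=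
    ((measurable_fderiv ℝ φ).comp hYmeas.measurable).stronglyMeasurable
  -- the three Bregman losses
  set DXZ : Ω → ℝ := fun ω => bregman φ (X ω) (Z ω) with hDXZ_def
  set DXY : Ω → ℝ := fun ω => bregman φ (X ω) (Y ω) with hDXY_def
  set DZY : Ω → ℝ := fun ω => bregman φ (Z ω) (Y ω) with hDZY_def
  have hDXZ0 : ∀ ω, 0 ≤ DXZ ω := fun ω => bregman_nonneg hφconv.convexOn hφdiff _ _
  have hDXY0 : ∀ ω, 0 ≤ DXY ω := fun ω => bregman_nonneg hφconv.convexOn hφdiff _ _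
  have hDZY0 : ∀ ω, 0 ≤ DZY ω := fun ω => bregman_nonneg hφconv.convexOn hφdiff _ _
  set t1 : Ω → ℝ := fun ω => fderiv ℝ φ (Z ω) (W ω) with ht1_def
  set t2 : Ω → ℝ := fun ω => fderiv ℝ φ (Y ω) (W ω) with ht2_def
  -- pointwise decomposition
  have hptwise : ∀ ω, DXY ω = DXZ ω + DZY ω + (t1 ω - t2 ω) := by
    intro ω
    show bregman φ (X ω) (Y ω) = bregman φ (X ω) (Z ω) + bregman φ (Z ω) (Y ω)
      + (fderiv ℝ φ (Z ω) (X ω - Z ω) - fderiv ℝ φ (Y ω) (X ω - Z ω))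
    unfold bregman
    have hsplit : X ω - Y ω = (X ω - Z ω) + (Z ω - Y ω) := by abel
    rw [hsplit, map_add]
    ring
  -- step 1 : t1 is integrable with zero integral
  have hbXZ : ∀ ω, t1 ω ≤ φ (X ω) - φ (Z ω) := by
    intro ω
    have h : 0 ≤ φ (X ω) - φ (Z ω) - fderiv ℝ φ (Z ω) (X ω - Z ω) := hDXZ0 ω
    show fderiv ℝ φ (Z ω) (X ω - Z ω) ≤ φ (X ω) - φ (Z ω)
    linarith
  have hlower : ∀ c : EuclideanSpace ℝ (Fin k), φ 0 + fderiv ℝ φ 0 c ≤ φ c := by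
    intro c
    have h : 0 ≤ φ c - φ 0 - fderiv ℝ φ 0 (c - 0) := bregman_nonneg hφconv.convexOn hφdiff c 0
    rw [sub_zero] at h
    linarith
  set q1 : Ω → ℝ := fun ω => φ (X ω) - φ 0 - fderiv ℝ φ 0 (Z ω) with hq1_def
  have hq1int : Integrable q1 μ :=
    (hφXint.sub (integrable_const _)).sub ((fderiv ℝ φ 0).integrable_comp hZint)
  have hle1 : ∀ ω, fderiv ℝ φ (Z ω) (W ω) ≤ q1 ω := by
    intro ω
    have h1 : fderiv ℝ φ (Z ω) (W ω) ≤ φ (X ω) - φ (Z ω) := hbXZ ω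
    have h2 := hlower (Z ω)
    show fderiv ℝ φ (Z ω) (W ω) ≤ φ (X ω) - φ 0 - fderiv ℝ φ 0 (Z ω)
    linarith
  obtain ⟨ht1int0, ht1zero0⟩ := key_zero hm hWint hWcond hgradZ hq1int hle1
  have ht1int : Integrable t1 μ := ht1int0
  have ht1zero : ∫ ω, t1 ω ∂μ = 0 := ht1zero0
  -- step 2 : DXZ is integrable
  have hDXZ_eq : DXZ = fun ω => φ (X ω) - φ (Z ω) - t1 ω := rfl
  have hDXZ_meas : AEStronglyMeasurable[mΩ] DXZ μ := bregman_aesm hφdiff hXint.1 hZint.1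
  have hDXZint : Integrable DXZ μ := by
    refine (hq1int.sub ht1int).mono hDXZ_meas (ae_of_all _ fun ω => ?_)
    rw [Real.norm_eq_abs, abs_of_nonneg (hDXZ0 ω), Real.norm_eq_abs]
    refine le_trans ?_ (le_abs_self _)
    have h2 := hlower (Z ω)
    show φ (X ω) - φ (Z ω) - t1 ω ≤ (φ (X ω) - φ 0 - fderiv ℝ φ 0 (Z ω)) - t1 ω
    linarith
  -- notation for the three lintegrals
  set B : ENNReal := ∫⁻ ω, ENNReal.ofReal (DXZ ω) ∂μ with hB_def
  set A : ENNReal := ∫⁻ ω, ENNReal.ofReal (DXY ω) ∂μ with hA_def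
  set C : ENNReal := ∫⁻ ω, ENNReal.ofReal (DZY ω) ∂μ with hC_def
  have hB_eq : B = ENNReal.ofReal (∫ ω, DXZ ω ∂μ) :=
    (ofReal_integral_eq_lintegral_ofReal hDXZint (ae_of_all _ hDXZ0)).symm
  have hBne : B ≠ ⊤ := by rw [hB_eq]; exact ENNReal.ofReal_ne_top
  -- from finite C (or finite A), t2 is integrable with zero integral
  have ht2_of_DZY : Integrable DZY μ → Integrable t2 μ ∧ ∫ ω, t2 ω ∂μ = 0 := by
    intro hDZYint
    refine key_zero hm hWint hWcond hgradY ((ht1int.add hDXZint).add hDZYint) fun ω => ?_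
    have h : DXY ω = DXZ ω + DZY ω + (t1 ω - fderiv ℝ φ (Y ω) (W ω)) := hptwise ω
    have := hDXY0 ω
    show fderiv ℝ φ (Y ω) (W ω) ≤ t1 ω + DXZ ω + DZY ω
    linarith
  have hDZY_meas : AEStronglyMeasurable[mΩ] DZY μ := bregman_aesm hφdiff hZint.1 hYint.1
  have hDXY_meas : AEStronglyMeasurable[mΩ] DXY μ := bregman_aesm hφdiff hXint.1 hYint.1
  have hDZY_int_of_C : C ≠ ⊤ → Integrable DZY μ := by
    intro hC
    refine ⟨hDZY_meas, ?_⟩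
    rw [hasFiniteIntegral_iff_norm]
    have he : ∀ ω, ENNReal.ofReal ‖DZY ω‖ = ENNReal.ofReal (DZY ω) := fun ω => by
      rw [Real.norm_eq_abs, abs_of_nonneg (hDZY0 ω)]
    rw [lintegral_congr he]
    exact lt_top_iff_ne_top.2 hC
  have hDXY_int_of_A : A ≠ ⊤ → Integrable DXY μ := by
    intro hA
    refine ⟨hDXY_meas, ?_⟩
    rw [hasFiniteIntegral_iff_norm]
    have he : ∀ ω, ENNReal.ofReal ‖DXY ω‖ = ENNReal.ofReal (DXY ω) := fun ω => by
      rw [Real.norm_eq_abs, abs_of_nonneg (hDXY0 ω)]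
    rw [lintegral_congr he]
    exact lt_top_iff_ne_top.2 hA
  -- A finite implies C finite
  have hCA : A ≠ ⊤ → C ≠ ⊤ := by
    intro hA
    have hDXYint := hDXY_int_of_A hA
    -- -t2 is integrable with zero integral
    have hneg : Integrable (fun ω => (-fderiv ℝ φ (Y ω)) (W ω)) μ
        ∧ ∫ ω, (-fderiv ℝ φ (Y ω)) (W ω) ∂μ = 0 := by
      refine key_zero hm hWint hWcond hgradY.neg ((hDXYint.sub ht1int)) fun ω => ?_
      have h : DXY ω = DXZ ω + DZY ω + (t1 ω - fderiv ℝ φ (Y ω) (W ω)) := hptwise ω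
      have h2 := hDZY0 ω
      have h3 := hDXZ0 ω
      show (-(fderiv ℝ φ (Y ω))) (W ω) ≤ DXY ω - t1 ω
      rw [ContinuousLinearMap.neg_apply]
      linarith
    have ht2int : Integrable t2 μ := by
      have := hneg.1.neg
      refine this.congr (ae_of_all _ fun ω => ?_)
      simp [ContinuousLinearMap.neg_apply, ht2_def]
    have hDZYint : Integrable DZY μ := by
      have heq : DZY = fun ω => DXY ω - DXZ ω - t1 ω + t2 ω := by
        funext ω
        have := hptwise ω
        linarith
      rw [heq]
      exact ((hDXYint.sub hDXZint).sub ht1int).add ht2int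
    rw [hC_def, ← ofReal_integral_eq_lintegral_ofReal hDZYint (ae_of_all _ hDZY0)]
    exact ENNReal.ofReal_ne_top
  -- main identity when C is finite
  have hABC : C ≠ ⊤ → A = B + C := by
    intro hC
    have hDZYint := hDZY_int_of_C hC
    obtain ⟨ht2int, ht2zero⟩ := ht2_of_DZY hDZYint
    have hDXYeq : DXY = fun ω => DXZ ω + DZY ω + (t1 ω - t2 ω) := funext hptwise
    have hDXYint : Integrable DXY μ := by
      rw [hDXYeq]
      exact (hDXZint.add hDZYint).add (ht1int.sub ht2int)
    have hint : ∫ ω, DXY ω ∂μ = ∫ ω, DXZ ω ∂μ + ∫ ω, DZY ω ∂μ := by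
      calc ∫ ω, DXY ω ∂μ
          = ∫ ω, (fun ω => DXZ ω + DZY ω) ω + (fun ω => t1 ω - t2 ω) ω ∂μ :=
            integral_congr_ae (ae_of_all _ fun ω => hptwise ω)
        _ = (∫ ω, DXZ ω + DZY ω ∂μ) + ∫ ω, t1 ω - t2 ω ∂μ :=
            integral_add (hDXZint.add hDZYint) (ht1int.sub ht2int)
        _ = ((∫ ω, DXZ ω ∂μ) + ∫ ω, DZY ω ∂μ) + ((∫ ω, t1 ω ∂μ) - ∫ ω, t2 ω ∂μ) := by
            rw [integral_add hDXZint hDZYint, integral_sub ht1int ht2int]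
        _ = ∫ ω, DXZ ω ∂μ + ∫ ω, DZY ω ∂μ := by rw [ht1zero, ht2zero]; ring
    rw [hA_def, ← ofReal_integral_eq_lintegral_ofReal hDXYint (ae_of_all _ hDXY0), hint,
      ENNReal.ofReal_add (integral_nonneg hDXZ0) (integral_nonneg hDZY0), hB_eq,
      ofReal_integral_eq_lintegral_ofReal hDZYint (ae_of_all _ hDZY0)]
  -- translating C = 0 into the a.e. statement
  have hC0 : C = 0 ↔ Y =ᵐ[μ] Z := by
    constructor
    · intro h
      have hmeas : AEMeasurable (fun ω => ENNReal.ofReal (DZY ω)) μ :=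
        ENNReal.measurable_ofReal.comp_aemeasurable hDZY_meas.aemeasurable
      rw [hC_def, lintegral_eq_zero_iff' hmeas] at h
      filter_upwards [h] with ω hω
      have h0 : ENNReal.ofReal (DZY ω) = 0 := hω
      rw [ENNReal.ofReal_eq_zero] at h0
      have hz : DZY ω = 0 := le_antisymm h0 (hDZY0 ω)
      have := (bregman_eq_zero_iff hφconv hφdiff (Z ω) (Y ω)).1 hz
      exact this.symm
    · intro h
      rw [hC_def]
      have : (fun ω => ENNReal.ofReal (DZY ω)) =ᵐ[μ] 0 := by
        filter_upwards [h] with ω hω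
        have : DZY ω = 0 := by
          show bregman φ (Z ω) (Y ω) = 0
          rw [hω]
          exact bregman_self _
        simp [this]
      rw [lintegral_congr_ae this]
      simp
  -- wrap up
  by_cases hC : C = ⊤
  · have hA : A = ⊤ := by
      by_contra hA
      exact (hCA hA) hC
    constructor
    · rw [hA]; exact le_top
    · constructor
      · intro hAB
        rw [hA] at hAB
        exact absurd hAB.symm hBne
      · intro h
        exact absurd ((hC0.2 h).symm.trans hC) ENNReal.zero_ne_top
  · have hid := hABC hC
    constructor
    · rw [hid]; exact le_self_add
    · rw [hid]
      constructor
      · intro h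
        have : B + C = B + 0 := by rw [add_zero]; exact h
        exact hC0.1 ((ENNReal.add_right_inj hBne).1 this)
      · intro h
        rw [hC0.2 h, add_zero]
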